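/- Let f : ℝᵖ → ℝ satisfy the bimodal Hessian condition with constants L, μ, κ_+, κ_-, ε and subspace S, and let θ_⋆ be its minimizer. Then for every θ ∈ ℝᵖ, the gradient step with the stable learning rate η = 1/L satisfies ‖Π_{Sᶜ}(θ − (1/L)·∇f(θ) − θ_⋆)‖ ≤ (1 − μ/(2L))·‖Π_{Sᶜ}(θ − θ_⋆)‖ + (ε/L)·‖Π_S(θ − θ_⋆)‖. -/

import Mathlib

open scoped RealInnerProductSpace

/-- The orthogonal projection onto a subspace `S` of `ℝᵖ`, as a map `ℝᵖ → ℝᵖ`. -/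
noncomputable def projE {p : ℕ} (S : Submodule ℝ (EuclideanSpace ℝ (Fin p)))
    (v : EuclideanSpace ℝ (Fin p)) : EuclideanSpace ℝ (Fin p) :=
  (S.orthogonalProjectionOnto v : EuclideanSpace ℝ (Fin p))

/-- The Hessian of `f : ℝᵖ → ℝ` at `x`, as the derivative of the gradient. -/
noncomputable def hessOp {p : ℕ} (f : EuclideanSpace ℝ (Fin p) → ℝ)
    (x : EuclideanSpace ℝ (Fin p)) :
    EuclideanSpace ℝ (Fin p) →L[ℝ] EuclideanSpace ℝ (Fin p) :=
  fderiv ℝ (gradient f) x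

/-- **Bimodal Hessian condition** (Definition 3): `f` is twice continuously
differentiable, `L`-smooth and `μ`-strongly convex, its Hessian restricted to the
subspace `S` has spectrum in `[L/κ₊, L]`, restricted to `Sᗮ` has spectrum in
`[μ, κ₋·μ]`, and the cross term `Π_S ∇²f(θ) Π_{Sᶜ}` has operator norm at most `ε`. -/
def BimodalHessian {p : ℕ} (f : EuclideanSpace ℝ (Fin p) → ℝ)
    (S : Submodule ℝ (EuclideanSpace ℝ (Fin p))) (L μ κp κm ε : ℝ) : Prop :=
  0 < μ ∧ μ < L ∧ 1 ≤ κp ∧ 1 ≤ κm ∧ 0 ≤ ε ∧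
  ContDiff ℝ 2 f ∧
  (∀ x v : EuclideanSpace ℝ (Fin p),
    μ * ‖v‖ ^ 2 ≤ ⟪v, hessOp f x v⟫ ∧ ⟪v, hessOp f x v⟫ ≤ L * ‖v‖ ^ 2) ∧
  (∀ x v : EuclideanSpace ℝ (Fin p),
    L / κp * ‖projE S v‖ ^ 2 ≤ ⟪projE S v, hessOp f x (projE S v)⟫ ∧
    ⟪projE S v, hessOp f x (projE S v)⟫ ≤ L * ‖projE S v‖ ^ 2) ∧
  (∀ x v : EuclideanSpace ℝ (Fin p),
    μ * ‖projE Sᗮ v‖ ^ 2 ≤ ⟪projE Sᗮ v, hessOp f x (projE Sᗮ v)⟫ ∧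
    ⟪projE Sᗮ v, hessOp f x (projE Sᗮ v)⟫ ≤ κm * μ * ‖projE Sᗮ v‖ ^ 2) ∧
  (∀ x v : EuclideanSpace ℝ (Fin p),
    ‖projE S (hessOp f x (projE Sᗮ v))‖ ≤ ε * ‖v‖)

/-! ### Auxiliary lemmas -/

section AuxProj

variable {p : ℕ} (K : Submodule ℝ (EuclideanSpace ℝ (Fin p)))

lemma projE_add (u v : EuclideanSpace ℝ (Fin p)) :
    projE K (u + v) = projE K u + projE K v := by simp [projE]

lemma projE_sub (u v : EuclideanSpace ℝ (Fin p)) :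
    projE K (u - v) = projE K u - projE K v := by simp [projE]

lemma projE_smul (c : ℝ) (v : EuclideanSpace ℝ (Fin p)) :
    projE K (c • v) = c • projE K v := by simp [projE]

lemma projE_idem (v : EuclideanSpace ℝ (Fin p)) :
    projE K (projE K v) = projE K v := by
  simp [projE, Submodule.orthogonalProjectionOnto_mem_subspace_eq_self, Submodule.starProjection_eq_self_iff]

lemma projE_inner (u v : EuclideanSpace ℝ (Fin p)) :
    ⟪projE K u, v⟫ = ⟪u, projE K v⟫ :=
  K.inner_starProjection_left_eq_right u v

lemma projE_norm_le (v : EuclideanSpace ℝ (Fin p)) : ‖projE K v‖ ≤ ‖v‖ := by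
  have h := Submodule.norm_sq_eq_add_norm_sq_projection v K
  have h2 : ‖projE K v‖ = ‖K.orthogonalProjectionOnto v‖ := rfl
  nlinarith [norm_nonneg (projE K v), norm_nonneg v,
    norm_nonneg ((Kᗮ.orthogonalProjectionOnto v : EuclideanSpace ℝ (Fin p)))]

lemma projE_add_orthogonal (v : EuclideanSpace ℝ (Fin p)) :
    projE K v + projE Kᗮ v = v :=
  K.starProjection_add_starProjection_orthogonal v

end AuxProj

section AuxHess

variable {p : ℕ} {f : EuclideanSpace ℝ (Fin p) → ℝ}

lemma aux_grad_contDiff (hf : ContDiff ℝ 2 f) : ContDiff ℝ 1 (gradient f) := by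
  have h1 : ContDiff ℝ 1 (fderiv ℝ f) := hf.fderiv_right (by norm_num)
  exact ((InnerProductSpace.toDual ℝ (EuclideanSpace ℝ (Fin p))).symm.contDiff).comp h1

lemma aux_hasFDerivAt_gradient (hf : ContDiff ℝ 2 f) (x) :
    HasFDerivAt (gradient f) (hessOp f x) x :=
  ((aux_grad_contDiff hf).differentiable (by norm_num) x).hasFDerivAt

lemma aux_hess_symm (hf : ContDiff ℝ 2 f) (x u v) :
    ⟪hessOp f x u, v⟫ = ⟪u, hessOp f x v⟫ := by
  have hfd : ∀ y, HasFDerivAt f (fderiv ℝ f y) y := fun y =>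
    (hf.differentiable (by norm_num) y).hasFDerivAt
  set DCLM : EuclideanSpace ℝ (Fin p) →L[ℝ] StrongDual ℝ (EuclideanSpace ℝ (Fin p)) :=
    (InnerProductSpace.toDual ℝ (EuclideanSpace ℝ (Fin p))).toLinearIsometry.toContinuousLinearMap
    with hDCLM
  have h2 : HasFDerivAt (fderiv ℝ f) (DCLM.comp (hessOp f x)) x := by
    have h4 := (DCLM.hasFDerivAt (x := gradient f x)).comp x (aux_hasFDerivAt_gradient hf x)
    have he : fderiv ℝ f = fun y => DCLM (gradient f y) := by
      funext y
      show fderiv ℝ f y =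
        InnerProductSpace.toDual ℝ _ ((InnerProductSpace.toDual ℝ _).symm (fderiv ℝ f y))
      rw [LinearIsometryEquiv.apply_symm_apply]
    rw [he]
    exact h4
  have hsecond := second_derivative_symmetric hfd h2 u v
  have e1 : ∀ a b : EuclideanSpace ℝ (Fin p),
      (DCLM.comp (hessOp f x)) a b = ⟪hessOp f x a, b⟫ := fun a b =>
    InnerProductSpace.toDual_apply_apply
  rw [e1, e1] at hsecond
  rw [hsecond, real_inner_comm]

lemma aux_hess_cont (hf : ContDiff ℝ 2 f) (θstar d : EuclideanSpace ℝ (Fin p)) :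
    Continuous fun s : ℝ => hessOp f (θstar + s • d) d := by
  have h1 : Continuous (fun x => hessOp f x) := (aux_grad_contDiff hf).continuous_fderiv (by norm_num)
  exact (h1.comp (continuous_const.add (continuous_id.smul continuous_const))).clm_apply
    continuous_const

lemma aux_gradient_min_zero {θstar : EuclideanSpace ℝ (Fin p)} (hmin : ∀ x, f θstar ≤ f x) :
    gradient f θstar = 0 := by
  have hloc : IsLocalMin f θstar := Filter.Eventually.of_forall hmin
  have h := hloc.fderiv_eq_zero
  show (InnerProductSpace.toDual ℝ (EuclideanSpace ℝ (Fin p))).symm (fderiv ℝ f θstar) = 0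
  rw [h, map_zero]

lemma aux_gradient_eq_integral (hf : ContDiff ℝ 2 f) {θstar : EuclideanSpace ℝ (Fin p)}
    (hg0 : gradient f θstar = 0) (θ : EuclideanSpace ℝ (Fin p)) :
    gradient f θ = ∫ s in (0:ℝ)..1, hessOp f (θstar + s • (θ - θstar)) (θ - θstar) := by
  set d := θ - θstar with hd
  have hderiv : ∀ s ∈ Set.uIcc (0:ℝ) 1,
      HasDerivAt (fun s : ℝ => gradient f (θstar + s • d)) (hessOp f (θstar + s • d) d) s := by
    intro s _
    have hcurve : HasDerivAt (fun s : ℝ => θstar + s • d) d s := by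
      simpa using (((hasDerivAt_id s).smul_const d).const_add θstar)
    exact (aux_hasFDerivAt_gradient hf (θstar + s • d)).comp_hasDerivAt s hcurve
  have hint : IntervalIntegrable (fun s : ℝ => hessOp f (θstar + s • d) d)
      MeasureTheory.volume 0 1 := (aux_hess_cont hf θstar d).intervalIntegrable 0 1
  have h := intervalIntegral.integral_eq_sub_of_hasDerivAt hderiv hint
  rw [h]
  simp only [one_smul, zero_smul, add_zero, hg0, sub_zero, hd, add_sub_cancel]

end AuxHess

/-- Cauchy–Schwarz style contraction bound for a symmetric PSD operator dominated by `c`. -/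
lemma aux_contraction {E' : Type*} [NormedAddCommGroup E'] [InnerProductSpace ℝ E']
    (B : E' →L[ℝ] E') (c : ℝ) (hc0 : 0 ≤ c)
    (hsym : ∀ x y : E', ⟪B x, y⟫ = ⟪x, B y⟫)
    (h0 : ∀ v : E', 0 ≤ ⟪v, B v⟫)
    (hc : ∀ v : E', ⟪v, B v⟫ ≤ c * ‖v‖ ^ 2) (u : E') : ‖B u‖ ≤ c * ‖u‖ := by
  have key : ∀ x y : E', ⟪x, B y⟫ ^ 2 ≤ ⟪x, B x⟫ * ⟪y, B y⟫ := by
    intro x y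
    have hq : ∀ t : ℝ, 0 ≤ ⟪y, B y⟫ * (t * t) + (2 * ⟪x, B y⟫) * t + ⟪x, B x⟫ := by
      intro t
      have h2 := h0 (x + t • y)
      have e1 : ⟪x + t • y, B (x + t • y)⟫
          = ⟪x, B x⟫ + 2 * t * ⟪x, B y⟫ + t ^ 2 * ⟪y, B y⟫ := by
        rw [map_add, map_smul]
        simp only [inner_add_left, inner_add_right, inner_smul_left, inner_smul_right,
          RCLike.ofReal_real_eq_id, id_eq, conj_trivial]
        have h3 : ⟪y, B x⟫ = ⟪x, B y⟫ := by rw [← hsym, real_inner_comm]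
        rw [h3]; ring
      rw [e1] at h2; nlinarith [h2]
    have h := discrim_le_zero hq
    rw [discrim] at h; nlinarith [h]
  have hBu := key u (B u)
  have e2 : ⟪u, B (B u)⟫ = ‖B u‖ ^ 2 := by
    rw [← hsym]; exact real_inner_self_eq_norm_sq _
  rw [e2] at hBu
  have h1 : ⟪u, B u⟫ * ⟪B u, B (B u)⟫ ≤ (c * ‖u‖ ^ 2) * (c * ‖B u‖ ^ 2) :=
    mul_le_mul (hc u) (hc (B u)) (h0 (B u)) (by positivity)
  have h2 : (‖B u‖ ^ 2) ^ 2 ≤ (c * ‖u‖ ^ 2) * (c * ‖B u‖ ^ 2) := le_trans hBu h1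
  rcases eq_or_lt_of_le (norm_nonneg (B u)) with hz | hz
  · rw [← hz]; positivity
  · have h3 : ‖B u‖ ^ 2 ≤ (c * ‖u‖) ^ 2 := by
      have hp : (0:ℝ) < ‖B u‖ ^ 2 := by positivity
      exact le_of_mul_le_mul_right
        (by nlinarith [h2] : ‖B u‖ ^ 2 * ‖B u‖ ^ 2 ≤ (c * ‖u‖) ^ 2 * ‖B u‖ ^ 2) hp
    exact (pow_le_pow_iff_left₀ (norm_nonneg _) (mul_nonneg hc0 (norm_nonneg _))
      (by norm_num)).mp h3

set_option maxHeartbeats 1000000 in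
/-- **Stable step: lower-subspace residual recursion** (proof of Theorem 2).
Under the bimodal Hessian condition, a gradient step with the stable learning rate
`1/L` satisfies
`‖Π_{Sᶜ}(θ − (1/L)∇f(θ) − θ⋆)‖ ≤ (1 − μ/(2L))‖Π_{Sᶜ}(θ − θ⋆)‖ + (ε/L)‖Π_S(θ − θ⋆)‖`. -/
theorem stable_step_lower_subspace
    {p : ℕ} (f : EuclideanSpace ℝ (Fin p) → ℝ)
    (S : Submodule ℝ (EuclideanSpace ℝ (Fin p)))
    (L μ κp κm ε : ℝ) (hbim : BimodalHessian f S L μ κp κm ε)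
    (θstar : EuclideanSpace ℝ (Fin p)) (hmin : ∀ x, f θstar ≤ f x)
    (θ : EuclideanSpace ℝ (Fin p)) :
    ‖projE Sᗮ (θ - (1 / L) • gradient f θ - θstar)‖
      ≤ (1 - μ / (2 * L)) * ‖projE Sᗮ (θ - θstar)‖ + (ε / L) * ‖projE S (θ - θstar)‖ := by
  obtain ⟨hμ, hμL, hκp, hκm, hε, hf, hglob, hSspec, hScspec, hcrossH⟩ := hbim
  have hL : (0:ℝ) < L := hμ.trans hμL
  set d := θ - θstar with hd
  have hg0 : gradient f θstar = 0 := aux_gradient_min_zero hmin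
  have hg : gradient f θ = ∫ s in (0:ℝ)..1, hessOp f (θstar + s • d) d :=
    aux_gradient_eq_integral hf hg0 θ
  set P : EuclideanSpace ℝ (Fin p) →L[ℝ] EuclideanSpace ℝ (Fin p) :=
    Sᗮ.subtypeL ∘L Sᗮ.orthogonalProjectionOnto with hPdef
  have hP : ∀ v, P v = projE Sᗮ v := fun v => rfl
  set u := projE Sᗮ d with hu
  set w := projE S d with hw
  set C := (1 - μ / (2 * L)) * ‖u‖ + (ε / L) * ‖w‖ with hC
  -- pointwise bound
  have hpt : ∀ s : ℝ, ‖u - (1 / L) • projE Sᗮ (hessOp f (θstar + s • d) d)‖ ≤ C := by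
    intro s
    set x := θstar + s • d with hx
    set H := hessOp f x with hH
    have hsymH : ∀ a b, ⟪H a, b⟫ = ⟪a, H b⟫ := aux_hess_symm hf x
    have hsymP : ∀ a b, ⟪projE Sᗮ a, b⟫ = ⟪a, projE Sᗮ b⟫ := projE_inner Sᗮ
    have hsymPS : ∀ a b, ⟪projE S a, b⟫ = ⟪a, projE S b⟫ := projE_inner S
    have hdw : w + u = d := projE_add_orthogonal S d
    have hsplit : u - (1 / L) • projE Sᗮ (H d)
        = (u - (1 / L) • projE Sᗮ (H u)) - (1 / L) • projE Sᗮ (H w) := by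
      have h1 : H d = H w + H u := by rw [← hdw, map_add]
      rw [h1, projE_add, smul_add]; abel
    -- term 1 via the contraction lemma
    set B : EuclideanSpace ℝ (Fin p) →L[ℝ] EuclideanSpace ℝ (Fin p) :=
      P - (1 / L) • (P ∘L H ∘L P) with hB
    have huu : projE Sᗮ u = u := projE_idem Sᗮ d
    have hBapp : ∀ v, B v = projE Sᗮ v - (1 / L) • projE Sᗮ (H (projE Sᗮ v)) := by
      intro v
      simp only [hB, ContinuousLinearMap.sub_apply, ContinuousLinearMap.smul_apply,
        ContinuousLinearMap.comp_apply, hP]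
    have hBu : B u = u - (1 / L) • projE Sᗮ (H u) := by rw [hBapp, huu]
    have hBsym : ∀ a b, ⟪B a, b⟫ = ⟪a, B b⟫ := by
      intro a b
      rw [hBapp, hBapp]
      simp only [inner_sub_left, inner_sub_right, real_inner_smul_left, real_inner_smul_right]
      rw [hsymP a b]
      congr 1
      rw [hsymP, hsymH, hsymP]
    have hform : ∀ v, ⟪v, B v⟫
        = ‖projE Sᗮ v‖ ^ 2 - (1 / L) * ⟪projE Sᗮ v, H (projE Sᗮ v)⟫ := by
      intro v
      rw [hBapp]
      rw [inner_sub_right, real_inner_smul_right]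
      congr 1
      · have h5 := hsymP v (projE Sᗮ v)
        rw [projE_idem] at h5
        rw [← h5, real_inner_self_eq_norm_sq]
      · rw [← hsymP v (H (projE Sᗮ v))]
    have hc0 : (0:ℝ) ≤ 1 - μ / L := by
      have : μ / L ≤ 1 := (div_le_one hL).mpr hμL.le
      linarith
    have hB0 : ∀ v, 0 ≤ ⟪v, B v⟫ := by
      intro v
      rw [hform]
      have h6 := (hglob x (projE Sᗮ v)).2
      rw [← hH] at h6
      have h7 : (1 / L) * ⟪projE Sᗮ v, H (projE Sᗮ v)⟫ ≤ (1 / L) * (L * ‖projE Sᗮ v‖ ^ 2) :=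
        mul_le_mul_of_nonneg_left h6 (by positivity)
      have h8 : (1 / L) * (L * ‖projE Sᗮ v‖ ^ 2) = ‖projE Sᗮ v‖ ^ 2 := by
        field_simp
      linarith
    have hBc : ∀ v, ⟪v, B v⟫ ≤ (1 - μ / L) * ‖v‖ ^ 2 := by
      intro v
      rw [hform]
      have h6 := (hScspec x v).1
      rw [← hH] at h6
      have h8 : ‖projE Sᗮ v‖ ≤ ‖v‖ := projE_norm_le Sᗮ v
      have h9 : ‖projE Sᗮ v‖ ^ 2 ≤ ‖v‖ ^ 2 := by nlinarith [norm_nonneg (projE Sᗮ v)]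
      have h10 : (0:ℝ) < 1 / L := by positivity
      have h11 : (1 / L) * (μ * ‖projE Sᗮ v‖ ^ 2) ≤ (1 / L) * ⟪projE Sᗮ v, H (projE Sᗮ v)⟫ :=
        mul_le_mul_of_nonneg_left h6 h10.le
      have h12 : (1 / L) * (μ * ‖projE Sᗮ v‖ ^ 2) = (μ / L) * ‖projE Sᗮ v‖ ^ 2 := by ring
      nlinarith [norm_nonneg (projE Sᗮ v)]
    have hterm1 : ‖B u‖ ≤ (1 - μ / L) * ‖u‖ :=
      aux_contraction B (1 - μ / L) hc0 hBsym hB0 hBc u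
    -- term 2 : cross bound
    have hcross : ‖projE Sᗮ (H w)‖ ≤ ε * ‖w‖ := by
      set z := projE Sᗮ (H w) with hz
      have hzz : projE Sᗮ z = z := projE_idem Sᗮ (H w)
      have hww : projE S w = w := projE_idem S d
      have h1 : ‖z‖ ^ 2 = ⟪w, projE S (H z)⟫ := by
        calc ‖z‖ ^ 2 = ⟪z, z⟫ := (real_inner_self_eq_norm_sq z).symm
          _ = ⟪H w, z⟫ := by rw [hz, hsymP, hzz]
          _ = ⟪w, H z⟫ := hsymH w z
          _ = ⟪projE S w, H z⟫ := by rw [hww]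
          _ = ⟪w, projE S (H z)⟫ := hsymPS w (H z)
      have h2 : ⟪w, projE S (H z)⟫ ≤ ‖w‖ * ‖projE S (H z)‖ := real_inner_le_norm _ _
      have h3 : ‖projE S (H z)‖ ≤ ε * ‖z‖ := by
        have h4 := hcrossH x z
        rwa [hzz] at h4
      rcases eq_or_lt_of_le (norm_nonneg z) with h5 | h5
      · rw [← h5]; positivity
      · have h6 : ‖z‖ ^ 2 ≤ ‖w‖ * (ε * ‖z‖) := by
          calc ‖z‖ ^ 2 = ⟪w, projE S (H z)⟫ := h1
            _ ≤ ‖w‖ * ‖projE S (H z)‖ := h2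
            _ ≤ ‖w‖ * (ε * ‖z‖) := mul_le_mul_of_nonneg_left h3 (norm_nonneg w)
        nlinarith [h6, norm_nonneg w]
    calc ‖u - (1 / L) • projE Sᗮ (H d)‖
        = ‖(u - (1 / L) • projE Sᗮ (H u)) - (1 / L) • projE Sᗮ (H w)‖ := by rw [hsplit]
      _ ≤ ‖u - (1 / L) • projE Sᗮ (H u)‖ + ‖(1 / L) • projE Sᗮ (H w)‖ := norm_sub_le _ _
      _ = ‖B u‖ + (1 / L) * ‖projE Sᗮ (H w)‖ := by
          rw [hBu, norm_smul, Real.norm_eq_abs, abs_of_pos (by positivity : (0:ℝ) < 1 / L)]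
      _ ≤ (1 - μ / L) * ‖u‖ + (1 / L) * (ε * ‖w‖) :=
          add_le_add hterm1 (mul_le_mul_of_nonneg_left hcross (by positivity))
      _ ≤ C := by
          rw [hC]
          have h13 : μ / (2 * L) ≤ μ / L := by
            rw [div_le_div_iff₀ (by linarith) hL]
            nlinarith [hμ.le]
          have h14 : (1 / L) * (ε * ‖w‖) = (ε / L) * ‖w‖ := by ring
          nlinarith [norm_nonneg u, h13]
  -- integral representation of the projected residual
  have hint : IntervalIntegrable (fun s : ℝ => hessOp f (θstar + s • d) d)
      MeasureTheory.volume 0 1 := (aux_hess_cont hf θstar d).intervalIntegrable 0 1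
  have hiv : projE Sᗮ (θ - (1 / L) • gradient f θ - θstar)
      = ∫ s in (0:ℝ)..1, (u - (1 / L) • projE Sᗮ (hessOp f (θstar + s • d) d)) := by
    have hveq : θ - (1 / L) • gradient f θ - θstar = d - (1 / L) • gradient f θ :=
      sub_right_comm _ _ _
    rw [hveq, projE_sub, projE_smul, hg]
    have hcomm : projE Sᗮ (∫ s in (0:ℝ)..1, hessOp f (θstar + s • d) d)
        = ∫ s in (0:ℝ)..1, projE Sᗮ (hessOp f (θstar + s • d) d) :=
      (P.intervalIntegral_comp_comm hint).symm
    rw [hcomm]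
    have hint2 : IntervalIntegrable (fun s : ℝ => (1 / L) • projE Sᗮ (hessOp f (θstar + s • d) d))
        MeasureTheory.volume 0 1 := by
      apply Continuous.intervalIntegrable
      exact ((P.continuous.comp (aux_hess_cont hf θstar d)).const_smul (1 / L : ℝ))
    rw [intervalIntegral.integral_sub intervalIntegrable_const hint2,
      intervalIntegral.integral_smul, intervalIntegral.integral_const]
    have hcomm2 : (∫ s in (0:ℝ)..1, projE Sᗮ (hessOp f (θstar + s • d) d))
        = projE Sᗮ (∫ s in (0:ℝ)..1, hessOp f (θstar + s • d) d) :=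
      P.intervalIntegral_comp_comm hint
    rw [hcomm2]
    simp [hu]
  rw [hiv]
  have hnorm := intervalIntegral.norm_integral_le_of_norm_le_const
    (C := C) (f := fun s : ℝ => u - (1 / L) • projE Sᗮ (hessOp f (θstar + s • d) d))
    (a := 0) (b := 1) (fun s _ => hpt s)
  simpa [hC] using hnorm
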